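/- Let n = 2p+1, and for g : (0,∞) → ℝ let (Δg)(r) = g''(r) + ((n-1)/r)·g'(r). Then for all k ≥ 1, i ≥ 0, and r > 0: (I − Δ)^k ψ_i(r) = 2^k (p−i)(p−i−1)···(p−i−k+1) · ψ_{i+k}(r). In particular, if i ≤ p and i + k > p then (I − Δ)^k ψ_i = 0. -/

import Mathlib

open scoped ContDiff


/-- ψ₀(r) = e^{-r}, ψ_{i+1}(r) = -(1/r)·ψ_i'(r). -/
noncomputable def psi : ℕ → ℝ → ℝ
  | 0 => fun r => Real.exp (-r)
  | (i+1) => fun r => -(1/r) * deriv (psi i) r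

/-- The operator (I − Δ), where Δ is the radial Laplacian on ℝⁿ, n = 2p+1. -/
noncomputable def oneSubLaplacian (p : ℕ) (g : ℝ → ℝ) : ℝ → ℝ :=
  fun r => g r - (deriv (deriv g) r + ((2 * (p : ℝ) + 1 - 1) / r) * deriv g r)

lemma psi_smooth (i : ℕ) : ContDiffOn ℝ ∞ (psi i) (Set.Ioi 0) := by
  induction i with
  | zero =>
      have : ContDiff ℝ ∞ (fun r : ℝ => Real.exp (-r)) :=
        Real.contDiff_exp.comp contDiff_neg
      exact this.contDiffOn
  | succ i ih =>
      have h1 : ContDiffOn ℝ ∞ (fun r : ℝ => -(1/r)) (Set.Ioi 0) := by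
        have : ContDiffOn ℝ ∞ (fun r : ℝ => (1:ℝ)/r) (Set.Ioi 0) :=
          contDiffOn_const.div contDiffOn_id (fun x hx => ne_of_gt hx)
        exact this.neg
      have h2 : ContDiffOn ℝ ∞ (deriv (psi i)) (Set.Ioi 0) :=
        ih.deriv_of_isOpen isOpen_Ioi (le_of_eq (by rfl))
      exact (h1.mul h2 : _)

lemma psi_diff (i : ℕ) {r : ℝ} (hr : 0 < r) : DifferentiableAt ℝ (psi i) r :=
  ((psi_smooth i).contDiffAt (isOpen_Ioi.mem_nhds hr)).differentiableAt
    (by simp)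

lemma deriv_psi (i : ℕ) {r : ℝ} (hr : 0 < r) :
    deriv (psi i) r = -r * psi (i+1) r := by
  have h : psi (i+1) r = -(1/r) * deriv (psi i) r := rfl
  rw [h]; field_simp

lemma deriv_psi_ev (i : ℕ) {r : ℝ} (hr : 0 < r) :
    deriv (psi i) =ᶠ[nhds r] fun s => -s * psi (i+1) s := by
  filter_upwards [isOpen_Ioi.mem_nhds hr] with s hs
  exact deriv_psi i hs

lemma deriv2_psi (i : ℕ) {r : ℝ} (hr : 0 < r) :
    deriv (deriv (psi i)) r = -psi (i+1) r + r^2 * psi (i+2) r := by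
  rw [(deriv_psi_ev i hr).deriv_eq]
  have h : HasDerivAt (fun s : ℝ => -s * psi (i+1) s)
      (-1 * psi (i+1) r + -r * deriv (psi (i+1)) r) r :=
    ((hasDerivAt_id r).neg.mul (psi_diff (i+1) hr).hasDerivAt)
  rw [h.deriv, deriv_psi (i+1) hr]
  ring

lemma psi_rec (i : ℕ) {r : ℝ} (hr : 0 < r) :
    r^2 * psi (i+2) r = psi i r + (2*(i:ℝ)+1) * psi (i+1) r := by
  induction i generalizing r with
  | zero =>
      have h0 : deriv (psi 0) r = -Real.exp (-r) := by
        have : HasDerivAt (fun s : ℝ => Real.exp (-s)) (-Real.exp (-r)) r := by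
          simpa [Function.comp_def] using (Real.hasDerivAt_exp (-r)).comp r (hasDerivAt_neg r)
        exact this.deriv
      have h2 := deriv2_psi 0 hr
      have hd2 : deriv (deriv (psi 0)) r = Real.exp (-r) := by
        have hev : deriv (psi 0) =ᶠ[nhds r] fun s => -Real.exp (-s) := by
          filter_upwards with s
          have : HasDerivAt (fun u : ℝ => Real.exp (-u)) (-Real.exp (-s)) s := by
            simpa [Function.comp_def] using (Real.hasDerivAt_exp (-s)).comp s (hasDerivAt_neg s)
          exact this.deriv
        rw [hev.deriv_eq]
        have : HasDerivAt (fun s : ℝ => -Real.exp (-s)) (Real.exp (-r)) r := by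
          simpa [Function.comp_def, Pi.neg_def] using ((Real.hasDerivAt_exp (-r)).comp r (hasDerivAt_neg r)).neg
        exact this.deriv
      rw [hd2] at h2
      have hψ0 : psi 0 r = Real.exp (-r) := rfl
      rw [hψ0]
      push_cast
      linarith [h2]
  | succ i ih =>
      -- differentiate the relation for i
      have hLHS : HasDerivAt (fun s : ℝ => s^2 * psi (i+2) s)
          ((2 * r^(2-1)) * psi (i+2) r + r^2 * deriv (psi (i+2)) r) r := by
        simpa [Pi.mul_def] using (hasDerivAt_pow 2 r).mul (psi_diff (i+2) hr).hasDerivAt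
      have hRHS : HasDerivAt (fun s : ℝ => psi i s + (2*(i:ℝ)+1) * psi (i+1) s)
          (deriv (psi i) r + (2*(i:ℝ)+1) * deriv (psi (i+1)) r) r :=
        (psi_diff i hr).hasDerivAt.add
          (((psi_diff (i+1) hr).hasDerivAt).const_mul (2*(i:ℝ)+1))
      have hev : (fun s : ℝ => s^2 * psi (i+2) s) =ᶠ[nhds r]
          (fun s : ℝ => psi i s + (2*(i:ℝ)+1) * psi (i+1) s) := by
        filter_upwards [isOpen_Ioi.mem_nhds hr] with s hs
        exact ih hs
      have heq : (2 * r^(2-1)) * psi (i+2) r + r^2 * deriv (psi (i+2)) r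
          = deriv (psi i) r + (2*(i:ℝ)+1) * deriv (psi (i+1)) r := by
        rw [← hLHS.deriv, ← hRHS.deriv, hev.deriv_eq]
      rw [deriv_psi i hr, deriv_psi (i+1) hr, deriv_psi (i+2) hr] at heq
      have hr' : r ≠ 0 := ne_of_gt hr
      have goal' : r * (r^2 * psi (i+1+2) r)
          = r * (psi (i+1) r + (2*((i:ℝ)+1)+1) * psi (i+1+1) r) := by
        have : i+1+2 = i+3 := rfl
        rw [this]
        have h2 : (2:ℕ) - 1 = 1 := rfl
        rw [h2, pow_one] at heq
        nlinarith [heq]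
      have := mul_left_cancel₀ hr' goal'
      push_cast at this ⊢
      linarith [this]

lemma key (p i : ℕ) {r : ℝ} (hr : 0 < r) :
    oneSubLaplacian p (psi i) r = 2 * ((p:ℝ) - i) * psi (i+1) r := by
  unfold oneSubLaplacian
  rw [deriv2_psi i hr, deriv_psi i hr]
  have hr' : r ≠ 0 := ne_of_gt hr
  have hrec := psi_rec i hr
  field_simp
  nlinarith [hrec]

lemma osl_const_mul (p : ℕ) (c : ℝ) (g : ℝ → ℝ) (r : ℝ) :
    oneSubLaplacian p (fun s => c * g s) r = c * oneSubLaplacian p g r := by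
  unfold oneSubLaplacian
  rw [deriv_const_mul_field' c, deriv_const_mul_field' (v := deriv g) c]
  simp only [deriv_const_mul_field]
  ring

lemma osl_congr (p : ℕ) {g h : ℝ → ℝ} (H : ∀ s ∈ Set.Ioi (0:ℝ), g s = h s)
    {r : ℝ} (hr : 0 < r) : oneSubLaplacian p g r = oneSubLaplacian p h r := by
  have hev : g =ᶠ[nhds r] h := by
    filter_upwards [isOpen_Ioi.mem_nhds hr] with s hs using H s hs
  unfold oneSubLaplacian
  rw [hev.deriv_eq, hev.deriv.deriv_eq, H r hr]

lemma main_formula (p i k : ℕ) : ∀ r : ℝ, 0 < r →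
    (oneSubLaplacian p)^[k] (psi i) r =
      2 ^ k * (∏ ℓ ∈ Finset.range k, ((p : ℝ) - i - ℓ)) * psi (i+k) r := by
  induction k generalizing i with
  | zero => intro r hr; simp
  | succ k ih =>
      intro r hr
      rw [Function.iterate_succ_apply']
      set C : ℝ := 2 ^ k * (∏ ℓ ∈ Finset.range k, ((p : ℝ) - i - ℓ)) with hC
      have h1 : oneSubLaplacian p ((oneSubLaplacian p)^[k] (psi i)) r
          = oneSubLaplacian p (fun s => C * psi (i+k) s) r :=
        osl_congr p (fun s hs => ih i s hs) hr
      rw [h1, osl_const_mul, key p (i+k) hr]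
      rw [Finset.prod_range_succ]
      have : ((p:ℝ) - (↑(i+k))) = (p:ℝ) - i - k := by push_cast; ring
      rw [this]
      have h3 : i + (k+1) = (i + k) + 1 := by ring
      rw [h3]
      ring

theorem one_sub_laplacian_pow_psi (p i k : ℕ) (hk : 1 ≤ k) :
    (∀ r : ℝ, 0 < r →
      (oneSubLaplacian p)^[k] (psi i) r =
        2 ^ k * (∏ ℓ ∈ Finset.range k, ((p : ℝ) - i - ℓ)) * psi (i+k) r) ∧
    (i ≤ p → p < i + k → ∀ r : ℝ, 0 < r → (oneSubLaplacian p)^[k] (psi i) r = 0) := by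
  refine ⟨main_formula p i k, fun hip hpk r hr => ?_⟩
  rw [main_formula p i k r hr]
  have hz : (∏ ℓ ∈ Finset.range k, ((p : ℝ) - i - ℓ)) = 0 := by
    apply Finset.prod_eq_zero (i := p - i)
    · exact Finset.mem_range.mpr (by omega)
    · have : ((p - i : ℕ) : ℝ) = (p:ℝ) - i := by
        push_cast [Nat.cast_sub hip]; ring
      rw [this]; ring
  rw [hz]; ring
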